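/- For angles α_A, α_B ∈ ℝ, the maximal eigenvalue modulus of the CHSH operator with settings A₀ = B₀ = −σ_z, A₁ = cos(α_A)σ_z + sin(α_A)σ_x, B₁ = cos(α_B)σ_z + sin(α_B)σ_x equals 2√(1 + |sin(α_A)||sin(α_B)|), which is ≥ 2, with equality iff sin(α_A)sin(α_B) = 0. -/

import Mathlib

open Matrix Kronecker

noncomputable def sigmaX : Matrix (Fin 2) (Fin 2) ℂ := !![0, 1; 1, 0]
noncomputable def sigmaZ : Matrix (Fin 2) (Fin 2) ℂ := !![1, 0; 0, -1]

noncomputable def Nm : Matrix (Fin 2) (Fin 2) ℂ := !![0, -1; 1, 0]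

set_option maxHeartbeats 2000000 in
lemma BBsq (cA sA cB sB : ℝ) (hA : sA^2 + cA^2 = 1) (hB : sB^2 + cB^2 = 1) :
    ((-sigmaZ) ⊗ₖ (-sigmaZ) + (-sigmaZ) ⊗ₖ ((cB:ℂ) • sigmaZ + (sB:ℂ) • sigmaX)
      + ((cA:ℂ) • sigmaZ + (sA:ℂ) • sigmaX) ⊗ₖ (-sigmaZ)
      - ((cA:ℂ) • sigmaZ + (sA:ℂ) • sigmaX) ⊗ₖ ((cB:ℂ) • sigmaZ + (sB:ℂ) • sigmaX))
    * ((-sigmaZ) ⊗ₖ (-sigmaZ) + (-sigmaZ) ⊗ₖ ((cB:ℂ) • sigmaZ + (sB:ℂ) • sigmaX)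
      + ((cA:ℂ) • sigmaZ + (sA:ℂ) • sigmaX) ⊗ₖ (-sigmaZ)
      - ((cA:ℂ) • sigmaZ + (sA:ℂ) • sigmaX) ⊗ₖ ((cB:ℂ) • sigmaZ + (sB:ℂ) • sigmaX))
    = (4:ℂ) • 1 - ((4*sA*sB : ℝ):ℂ) • (Nm ⊗ₖ Nm) := by
  have hA' : (sA:ℂ)^2 + (cA:ℂ)^2 = 1 := by exact_mod_cast congrArg (Complex.ofReal ·) hA
  have hB' : (sB:ℂ)^2 + (cB:ℂ)^2 = 1 := by exact_mod_cast congrArg (Complex.ofReal ·) hB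
  ext ⟨i,j⟩ ⟨k,l⟩
  fin_cases i <;> fin_cases j <;> fin_cases k <;> fin_cases l <;>
    simp [sigmaX, sigmaZ, Nm, Matrix.mul_apply, Fintype.sum_prod_type,
      Fin.sum_univ_succ, Matrix.one_apply, Prod.ext_iff] <;>
    first
      | ring1
      | linear_combination ((1:ℂ) + (sB:ℂ)^2 + 2*(cB:ℂ) + (cB:ℂ)^2) * hA' + (2 + 2*(cA:ℂ)) * hB'

lemma NmNm_sq : (Nm ⊗ₖ Nm) * (Nm ⊗ₖ Nm) = (1 : Matrix (Fin 2 × Fin 2) (Fin 2 × Fin 2) ℂ) := by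
  ext ⟨i,j⟩ ⟨k,l⟩
  fin_cases i <;> fin_cases j <;> fin_cases k <;> fin_cases l <;>
    simp [Nm, Matrix.mul_apply, Fintype.sum_prod_type,
      Fin.sum_univ_succ, Matrix.one_apply, Prod.ext_iff]

/-- The maximal eigenvalue modulus of the CHSH operator with settings determined by
angles `αA`, `αB` equals `2√(1+|sin αA||sin αB|) ≥ 2`, with equality iff
`sin αA · sin αB = 0`. -/
theorem stmt_14 (αA αB : ℝ)
    (A₀ A₁ B₀ B₁ : Matrix (Fin 2) (Fin 2) ℂ)
    (hA₀ : A₀ = -sigmaZ) (hB₀ : B₀ = -sigmaZ)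
    (hA₁ : A₁ = (Real.cos αA : ℂ) • sigmaZ + (Real.sin αA : ℂ) • sigmaX)
    (hB₁ : B₁ = (Real.cos αB : ℂ) • sigmaZ + (Real.sin αB : ℂ) • sigmaX)
    (B : Matrix (Fin 2 × Fin 2) (Fin 2 × Fin 2) ℂ)
    (hB : B = A₀ ⊗ₖ B₀ + A₀ ⊗ₖ B₁ + A₁ ⊗ₖ B₀ - A₁ ⊗ₖ B₁) :
    (∃ lam : ℂ, Module.End.HasEigenvalue (Matrix.toLin' B) lam ∧
        ‖lam‖ = 2 * Real.sqrt (1 + |Real.sin αA| * |Real.sin αB|)) ∧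
    (∀ lam : ℂ, Module.End.HasEigenvalue (Matrix.toLin' B) lam →
        ‖lam‖ ≤ 2 * Real.sqrt (1 + |Real.sin αA| * |Real.sin αB|)) ∧
    2 ≤ 2 * Real.sqrt (1 + |Real.sin αA| * |Real.sin αB|) ∧
    (2 * Real.sqrt (1 + |Real.sin αA| * |Real.sin αB|) = 2 ↔
      Real.sin αA * Real.sin αB = 0) := by
  subst hA₀ hB₀ hA₁ hB₁
  set s : ℝ := Real.sin αA * Real.sin αB with hs
  set t : ℝ := |Real.sin αA| * |Real.sin αB| with htdef
  have ht0 : 0 ≤ t := mul_nonneg (abs_nonneg _) (abs_nonneg _)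
  have hts : |s| = t := abs_mul _ _
  have hsq : B * B = (4:ℂ) • 1 - ((4*s : ℝ):ℂ) • (Nm ⊗ₖ Nm) := by
    rw [hB, show (4*s : ℝ) = 4 * Real.sin αA * Real.sin αB by rw [hs]; ring]
    exact BBsq _ _ _ _ (Real.sin_sq_add_cos_sq αA) (Real.sin_sq_add_cos_sq αB)
  set lamR : ℝ := 2 * Real.sqrt (1 + t) with hlamR
  have hlamR0 : 0 ≤ lamR := by positivity
  have hlamRsq : lamR ^ 2 = 4 + 4 * t := by
    rw [hlamR, mul_pow, Real.sq_sqrt (by linarith)]; ring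
  refine ⟨?_, ?_, ?_, ?_⟩
  · -- existence
    set ε : ℝ := if 0 ≤ s then -1 else 1 with hε
    have hε2 : (ε:ℂ)^2 = 1 := by
      rw [hε]; split_ifs <;> norm_num
    have hεs : s * ε = -t := by
      rw [hε]; split_ifs with h
      · rw [← hts, abs_of_nonneg h]; ring
      · rw [← hts, abs_of_neg (lt_of_not_ge h)]; ring
    set w : Fin 2 × Fin 2 → ℂ := fun p => if p = (0,0) then 1 else if p = (1,1) then (ε:ℂ) else 0 with hw
    have hw0 : w ≠ 0 := by
      intro h
      have := congrFun h (0,0)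
      simp [hw] at this
    have hMw : (Nm ⊗ₖ Nm).mulVec w = (ε:ℂ) • w := by
      funext p
      rcases p with ⟨i, j⟩
      fin_cases i <;> fin_cases j <;>
        simp [hw, Matrix.mulVec, dotProduct, Fintype.sum_prod_type, Fin.sum_univ_succ, Nm,
          Prod.ext_iff] <;>
        first
          | ring1
          | linear_combination hε2
          | linear_combination 2*hε2
          | linear_combination (-1:ℂ)*hε2
          | linear_combination (-2:ℂ)*hε2
    have hBBw : (B * B).mulVec w = ((lamR:ℂ)^2) • w := by
      rw [hsq, Matrix.sub_mulVec, Matrix.smul_mulVec, Matrix.smul_mulVec,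
        Matrix.one_mulVec, hMw]
      rw [smul_smul, ← sub_smul]
      congr 1
      have : ((4*s : ℝ):ℂ) * (ε:ℂ) = ((4 * (s*ε) : ℝ):ℂ) := by push_cast; ring
      rw [this, hεs]
      have : (lamR:ℂ)^2 = ((lamR^2 : ℝ):ℂ) := by push_cast; ring
      rw [this, hlamRsq]
      push_cast; ring
    set u : Fin 2 × Fin 2 → ℂ := B.mulVec w + (lamR:ℂ) • w with hu
    by_cases hu0 : u = 0
    · -- B w = -lamR w
      have hBw : B.mulVec w = (-(lamR:ℂ)) • w := by
        have := hu0
        rw [hu] at this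
        have h2 : B.mulVec w = -((lamR:ℂ) • w) := by
          rw [← sub_eq_zero]; rw [sub_neg_eq_add]; exact this
        rw [h2, neg_smul]
      refine ⟨-(lamR:ℂ), ?_, by simp [hlamR, abs_of_nonneg hlamR0]⟩
      apply Module.End.hasEigenvalue_of_hasEigenvector (x := w)
      refine ⟨Module.End.mem_eigenspace_iff.2 ?_, hw0⟩
      rw [Matrix.toLin'_apply, hBw]
    · refine ⟨(lamR:ℂ), ?_, by simp [hlamR, abs_of_nonneg hlamR0]⟩
      apply Module.End.hasEigenvalue_of_hasEigenvector (x := u)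
      refine ⟨Module.End.mem_eigenspace_iff.2 ?_, hu0⟩
      rw [Matrix.toLin'_apply, hu]
      rw [Matrix.mulVec_add, Matrix.mulVec_smul, Matrix.mulVec_mulVec, hBBw]
      module
  · -- upper bound
    intro lam hlam
    obtain ⟨v, hv⟩ := hlam.exists_hasEigenvector
    have hv0 : v ≠ 0 := hv.2
    have h1 : B.mulVec v = lam • v := by
      have := Module.End.mem_eigenspace_iff.1 hv.1
      rwa [Matrix.toLin'_apply] at this
    have h2 : (B * B).mulVec v = (lam^2) • v := by
      rw [← Matrix.mulVec_mulVec, h1, Matrix.mulVec_smul, h1, smul_smul, sq]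
    set c : ℂ := ((4*s : ℝ):ℂ) with hc
    have h3 : c • (Nm ⊗ₖ Nm).mulVec v = ((4:ℂ) - lam^2) • v := by
      rw [hsq] at h2
      rw [Matrix.sub_mulVec, Matrix.smul_mulVec, Matrix.smul_mulVec,
        Matrix.one_mulVec] at h2
      rw [sub_smul, eq_sub_iff_add_eq, add_comm]
      rw [sub_eq_iff_eq_add] at h2
      exact h2.symm
    have h4 : c • ((Nm ⊗ₖ Nm).mulVec ((Nm ⊗ₖ Nm).mulVec v)) = ((4:ℂ) - lam^2) • (Nm ⊗ₖ Nm).mulVec v := by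
      rw [← Matrix.mulVec_smul, h3, Matrix.mulVec_smul]
    have h5 : c • v = ((4:ℂ) - lam^2) • (Nm ⊗ₖ Nm).mulVec v := by
      rw [Matrix.mulVec_mulVec, NmNm_sq, Matrix.one_mulVec] at h4
      exact h4
    have h6 : (c^2) • v = (((4:ℂ) - lam^2)^2) • v := by
      calc (c^2) • v = c • (c • v) := by rw [smul_smul, ← sq]
        _ = c • (((4:ℂ) - lam^2) • (Nm ⊗ₖ Nm).mulVec v) := by rw [h5]
        _ = ((4:ℂ) - lam^2) • (c • (Nm ⊗ₖ Nm).mulVec v) := smul_comm _ _ _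
        _ = ((4:ℂ) - lam^2) • (((4:ℂ) - lam^2) • v) := by rw [h3]
        _ = (((4:ℂ) - lam^2)^2) • v := by rw [smul_smul, ← sq]
    have h7 : c^2 = ((4:ℂ) - lam^2)^2 := by
      by_contra h
      apply hv0
      have := sub_eq_zero.2 h6
      rw [← sub_smul] at this
      rcases smul_eq_zero.1 this with h' | h'
      · exact absurd (sub_eq_zero.1 h') h
      · exact h'
    have h8 : lam^2 = ((4 + 4*s : ℝ):ℂ) ∨ lam^2 = ((4 - 4*s : ℝ):ℂ) := by
      have : (lam^2 - ((4 + 4*s : ℝ):ℂ)) * (lam^2 - ((4 - 4*s : ℝ):ℂ)) = 0 := by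
        rw [hc] at h7
        push_cast
        push_cast at h7
        linear_combination -h7
      rcases mul_eq_zero.1 this with h' | h'
      · exact Or.inl (sub_eq_zero.1 h')
      · exact Or.inr (sub_eq_zero.1 h')
    have key : ‖lam‖^2 ≤ 4 + 4*t := by
      have habs : ‖lam‖^2 = ‖lam^2‖ := by
        rw [norm_pow]
      rcases h8 with h' | h' <;> rw [habs, h', Complex.norm_real, Real.norm_eq_abs] <;>
        (rw [abs_le]; constructor) <;>
        nlinarith [le_abs_self s, neg_abs_le s, hts]
    have : ‖lam‖ ≤ lamR := by
      nlinarith [norm_nonneg lam, hlamRsq, hlamR0, key]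
    exact this
  · -- 2 ≤ lamR
    nlinarith [Real.sq_sqrt (show (0:ℝ) ≤ 1 + t by linarith), Real.sqrt_nonneg (1+t)]
  · constructor
    · intro h
      have h1 : Real.sqrt (1 + t) = 1 := by linarith
      have h2 : 1 + t = 1 := by
        have := Real.sq_sqrt (show (0:ℝ) ≤ 1 + t by linarith)
        rw [h1] at this; linarith
      have ht : t = 0 := by linarith
      rw [← hts] at ht
      exact abs_eq_zero.1 ht
    · intro h
      have ht : t = 0 := by rw [← hts, h, abs_zero]
      rw [hlamR, ht]
      norm_num
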